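/- Let k be a positive integer, let 0 = N₀ ≤ N₁ ≤ ⋯ ≤ N_k be integers with N_k ≥ 1, and let U₁, …, U_{N_k} be independent integrable real random variables such that for each block index b ∈ {1,…,k}, the variables U_j for j ∈ {N_{b−1}+1, …, N_b} all have mean I_b and variance V_b. Set S = Σ_{j=1}^{N_k} U_j, Ī = Σ_{b=1}^{k} (N_b − N_{b−1})·I_b, and V̄ = Σ_{b=1}^{k} (N_b − N_{b−1})·V_b, and assume V̄ > 0. Suppose there is a constant B ≥ 0 such that for every λ ∈ ℝ, | P[ (S − Ī)/√V̄ ≥ λ ] − Q(λ) | ≤ B/√(N_k). Let ε ∈ (0,1), s ∈ (0,1], let M be a real number with M ≥ 2, and let λ ∈ ℝ be such that Q(λ) + B/√(N_k) + N_k^{−s} ≤ ε and log₂((M−1)/2) + s·log₂ N_k ≤ Ī − √V̄·λ. Then E[ 2^{ − max{ 0 , S − log₂((M−1)/2) } } ] ≤ ε. -/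

import Mathlib

open MeasureTheory ProbabilityTheory Finset

/-- The Gaussian Q-function `Q(λ) = ∫_λ^∞ (1/√(2π)) e^{-t²/2} dt`. -/
noncomputable def gaussQ (l : ℝ) : ℝ :=
  ∫ t in Set.Ioi l, (Real.sqrt (2 * Real.pi))⁻¹ * Real.exp (-t ^ 2 / 2)

lemma gaussDensity_integrable :
    Integrable (fun t : ℝ => (Real.sqrt (2 * Real.pi))⁻¹ * Real.exp (-t ^ 2 / 2)) := by
  have h := (integrable_exp_neg_mul_sq (by norm_num : (0:ℝ) < 1/2)).const_mul
    (Real.sqrt (2 * Real.pi))⁻¹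
  convert h using 2 with t
  ring_nf

lemma gaussDensity_integral :
    ∫ t : ℝ, (Real.sqrt (2 * Real.pi))⁻¹ * Real.exp (-t ^ 2 / 2) = 1 := by
  have h := integral_gaussian (1/2 : ℝ)
  have h2 : ∫ t : ℝ, Real.exp (-t ^ 2 / 2) = Real.sqrt (2 * Real.pi) := by
    rw [show (2 : ℝ) * Real.pi = Real.pi / (1/2) by ring, ← h]
    congr 1 with t
    ring_nf
  rw [integral_const_mul, h2, inv_mul_cancel₀]
  positivity

lemma gaussQ_add_gaussQ_neg (l : ℝ) : gaussQ l + gaussQ (-l) = 1 := by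
  set f : ℝ → ℝ := fun t => (Real.sqrt (2 * Real.pi))⁻¹ * Real.exp (-t ^ 2 / 2) with hf
  have hneg : gaussQ (-l) = ∫ t in Set.Iic l, f t := by
    rw [gaussQ, ← integral_comp_neg_Iic]
    congr 1 with t
    simp [hf, neg_neg]
  rw [hneg, add_comm, gaussQ, ← hf,
    intervalIntegral.integral_Iic_add_Ioi gaussDensity_integrable.integrableOn
      gaussDensity_integrable.integrableOn, gaussDensity_integral]

/-- The quantitative core of Propositions 2 and 3 of the paper (heterogeneous
blocklengths): with block boundaries `0 = N 0 ≤ N 1 ≤ ⋯ ≤ N k`, independent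
information densities `U j` whose mean and variance are `I b` and `V b` on the `b`-th
block `{N (b-1), …, N b - 1}`, block-averaged mean `Ī = Σ_b (N b - N (b-1))·I b` and
variance `V̄ = Σ_b (N b - N (b-1))·V b > 0` satisfying a Berry–Esseen bound with
constant `B`, and any `ε ∈ (0,1)`, `s ∈ (0,1]`, codebook size `M ≥ 2` and `λ` with
`Q(λ) + B/√(N k) + (N k)^{-s} ≤ ε` and
`log₂((M-1)/2) + s·log₂(N k) ≤ Ī - √V̄·λ`, the dependence-testing expression satisfies
`E[2^{-max{0, S - log₂((M-1)/2)}}] ≤ ε` where `S = Σ_{j < N k} U j`. -/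
theorem second_order_rate_heterogeneous {Ω : Type*} [MeasurableSpace Ω]
    (μ : Measure Ω) [IsProbabilityMeasure μ]
    (k : ℕ) (hk : 0 < k) (N : ℕ → ℕ) (hN0 : N 0 = 0)
    (hNmono : ∀ b < k, N b ≤ N (b + 1)) (hNk : 1 ≤ N k)
    (U : ℕ → Ω → ℝ)
    (hmeas : ∀ j, Measurable (U j))
    (hint : ∀ j, Integrable (U j) μ)
    (hindep : iIndepFun (fun j : Fin (N k) => U j) μ)
    (I V : ℕ → ℝ)
    (hmean : ∀ b < k, ∀ j ∈ Finset.Ico (N b) (N (b + 1)), ∫ ω, U j ω ∂μ = I b)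
    (hvar : ∀ b < k, ∀ j ∈ Finset.Ico (N b) (N (b + 1)), variance (U j) μ = V b)
    (Ibar Vbar : ℝ)
    (hIbar : Ibar = ∑ b ∈ Finset.range k, ((N (b + 1) : ℝ) - N b) * I b)
    (hVbar : Vbar = ∑ b ∈ Finset.range k, ((N (b + 1) : ℝ) - N b) * V b)
    (hVbarpos : 0 < Vbar)
    (B : ℝ) (hB : 0 ≤ B)
    (hBE : ∀ l : ℝ,
      |(μ {ω | ((∑ j ∈ Finset.range (N k), U j ω) - Ibar) / Real.sqrt Vbar ≥ l}).toReal
          - gaussQ l| ≤ B / Real.sqrt (N k))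
    (ε : ℝ) (hε0 : 0 < ε) (hε1 : ε < 1)
    (s : ℝ) (hs0 : 0 < s) (hs1 : s ≤ 1)
    (M : ℝ) (hM : 2 ≤ M)
    (l : ℝ)
    (hl1 : gaussQ l + B / Real.sqrt (N k) + ((N k : ℝ)) ^ (-s) ≤ ε)
    (hl2 : Real.logb 2 ((M - 1) / 2) + s * Real.logb 2 (N k) ≤
      Ibar - Real.sqrt Vbar * l) :
    ∫ ω, (2 : ℝ) ^
        (-(max 0 ((∑ j ∈ Finset.range (N k), U j ω) - Real.logb 2 ((M - 1) / 2)))) ∂μ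
      ≤ ε := by
  set S : Ω → ℝ := fun ω => ∑ j ∈ Finset.range (N k), U j ω with hS
  set γ : ℝ := Real.logb 2 ((M - 1) / 2) with hγ
  set c : ℝ := (N k : ℝ) ^ (-s) with hc
  set T : ℝ := γ + s * Real.logb 2 (N k) with hT
  have hNpos : (0 : ℝ) < N k := by exact_mod_cast hNk
  have hlogN : 0 ≤ s * Real.logb 2 (N k) :=
    mul_nonneg hs0.le (Real.logb_nonneg (by norm_num) (by exact_mod_cast hNk))
  have hSmeas : Measurable S := Finset.measurable_sum _ fun j _ => hmeas j
  have hsqrtpos : 0 < Real.sqrt Vbar := Real.sqrt_pos.mpr hVbarpos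
  -- pointwise bound
  set A : Set Ω := {ω | S ω < T} with hA
  have hAmeas : MeasurableSet A := measurableSet_lt hSmeas measurable_const
  have hcnonneg : 0 ≤ c := Real.rpow_nonneg hNpos.le _
  have hpt : ∀ ω, (2 : ℝ) ^ (-(max 0 (S ω - γ))) ≤ A.indicator (fun _ => (1:ℝ)) ω + c := by
    intro ω
    by_cases hω : ω ∈ A
    · rw [Set.indicator_of_mem hω]
      have : (2 : ℝ) ^ (-(max 0 (S ω - γ))) ≤ 1 :=
        Real.rpow_le_one_of_one_le_of_nonpos one_le_two (neg_nonpos.mpr (le_max_left _ _))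
      linarith
    · rw [Set.indicator_of_notMem hω, zero_add]
      have hge : T ≤ S ω := not_lt.mp hω
      have h1 : s * Real.logb 2 (N k) ≤ max 0 (S ω - γ) :=
        le_trans (by simp only [hT] at hge; linarith) (le_max_right _ _)
      have h2 : (2 : ℝ) ^ (-(max 0 (S ω - γ))) ≤ (2:ℝ) ^ (-(s * Real.logb 2 (N k))) :=
        Real.rpow_le_rpow_of_exponent_le one_le_two (by linarith)
      have h3 : (2:ℝ) ^ (-(s * Real.logb 2 (N k))) = c := by
        rw [show -(s * Real.logb 2 (N k)) = Real.logb 2 (N k) * (-s) by ring,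
          Real.rpow_mul (by norm_num),
          Real.rpow_logb (by norm_num) (by norm_num) hNpos]
      linarith [h2, h3.le]
  -- integrability
  have hfmeas : Measurable fun ω => (2 : ℝ) ^ (-(max 0 (S ω - γ))) := by
    have h2x : ∀ x : ℝ, (2 : ℝ) ^ x = Real.exp (Real.log 2 * x) := fun x =>
      Real.rpow_def_of_pos two_pos x
    simp only [h2x]
    exact Real.measurable_exp.comp
      (measurable_const.mul ((measurable_const.max (hSmeas.sub measurable_const)).neg))
  have hfint : Integrable (fun ω => (2 : ℝ) ^ (-(max 0 (S ω - γ)))) μ := by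
    refine (integrable_const (1:ℝ)).mono' hfmeas.aestronglyMeasurable ?_
    filter_upwards with ω
    rw [Real.norm_eq_abs, abs_of_nonneg (Real.rpow_nonneg (by norm_num) _)]
    exact Real.rpow_le_one_of_one_le_of_nonpos one_le_two (neg_nonpos.mpr (le_max_left _ _))
  have hgint : Integrable (fun ω => A.indicator (fun _ => (1:ℝ)) ω + c) μ :=
    ((integrable_const (1:ℝ)).indicator hAmeas).add (integrable_const c)
  have hstep1 : ∫ ω, (2 : ℝ) ^ (-(max 0 (S ω - γ))) ∂μ ≤ (μ A).toReal + c := by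
    calc ∫ ω, (2 : ℝ) ^ (-(max 0 (S ω - γ))) ∂μ
        ≤ ∫ ω, (A.indicator (fun _ => (1:ℝ)) ω + c) ∂μ :=
          integral_mono hfint hgint hpt
      _ = (μ A).toReal + c := by
          rw [integral_add ((integrable_const (1:ℝ)).indicator hAmeas) (integrable_const c),
            integral_indicator_const _ hAmeas, integral_const]
          simp [measure_univ]
          rfl
  -- probability bound
  set E : Set Ω := {ω | (S ω - Ibar) / Real.sqrt Vbar ≥ -l} with hE
  have hEmeas : MeasurableSet E :=
    measurableSet_le measurable_const ((hSmeas.sub measurable_const).div measurable_const)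
  have hsub : A ⊆ Eᶜ := by
    intro ω hω
    simp only [hE, Set.mem_compl_iff, Set.mem_setOf_eq, ge_iff_le, not_le]
    have hωA : S ω < T := hω
    have : S ω < Ibar - Real.sqrt Vbar * l := lt_of_lt_of_le hωA (by rw [hT, hγ]; linarith)
    rw [div_lt_iff₀ hsqrtpos]
    nlinarith
  have hcompl : (μ Eᶜ).toReal = 1 - (μ E).toReal := by
    rw [prob_compl_eq_one_sub hEmeas, ENNReal.toReal_sub_of_le prob_le_one (by norm_num)]
    simp
  have hBEl := hBE (-l)
  have hBEl' : gaussQ (-l) - B / Real.sqrt (N k) ≤ (μ E).toReal := by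
    have := abs_le.mp hBEl
    have heq : (μ {ω | ((∑ j ∈ Finset.range (N k), U j ω) - Ibar) / Real.sqrt Vbar ≥ -l}).toReal
        = (μ E).toReal := rfl
    linarith [this.1, heq ▸ this.1]
  have hmuA : (μ A).toReal ≤ gaussQ l + B / Real.sqrt (N k) := by
    have h1 : (μ A).toReal ≤ (μ Eᶜ).toReal :=
      ENNReal.toReal_mono (measure_ne_top μ _) (measure_mono hsub)
    have h2 := gaussQ_add_gaussQ_neg l
    rw [hcompl] at h1
    linarith
  calc ∫ ω, (2 : ℝ) ^ (-(max 0 (S ω - γ))) ∂μ ≤ (μ A).toReal + c := hstep1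
    _ ≤ gaussQ l + B / Real.sqrt (N k) + c := by linarith
    _ ≤ ε := hl1
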